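/- Let γ > 0, θ ∈ (0, π/2), and let A_p ∈ ℝ^{n×n}, B_w ∈ ℝ^{n×m}, B_p ∈ ℝ^{n×p}, C_p ∈ ℝ^{q×n}, C_z ∈ ℝ^{r×n}, D_z ∈ ℝ^{r×m} be given plant matrices. Suppose there exist symmetric real n×n matrices S and R and real matrices Â ∈ ℝ^{n×n}, B̂ ∈ ℝ^{n×q}, Ĉ ∈ ℝ^{p×n} such that, with Φ₁ = A_p S + S A_pᵀ + B_p Ĉ + Ĉᵀ B_pᵀ, Φ₂ = A_pᵀ R + R A_p + B̂ C_p + C_pᵀ B̂ᵀ and Φ₃ = [[A_p S + B_p Ĉ, A_p],[Â, R A_p + B̂ C_p]], the following three matrix inequalities hold: (i) the symmetric block matrix [[Φ₁, Âᵀ + A_p, B_w, S C_zᵀ],[Â + A_pᵀ, Φ₂, R B_w, C_zᵀ],[B_wᵀ, B_wᵀ Rᵀ, −γI, D_zᵀ],[C_z S, C_z, D_z, −γI]] is negative definite; (ii) the block matrix [[sin θ·(Φ₃ + Φ₃ᵀ), cos θ·(Φ₃ − Φ₃ᵀ)],[cos θ·(Φ₃ᵀ − Φ₃), sin θ·(Φ₃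 + Φ₃ᵀ)]] is negative definite; (iii) the block matrix [[S, I],[I, R]] is positive definite. Then there exist controller matrices A_c ∈ ℝ^{n×n}, B_c ∈ ℝ^{n×q}, C_c ∈ ℝ^{p×n} such that, for the closed-loop matrices A = [[A_p, B_p C_c],[B_c C_p, A_c]], B = [[B_w],[0]], C = [C_z 0], D = D_z: (a) every complex eigenvalue λ of A satisfies Re λ < 0 and cos θ·|Im λ| < sin θ·|Re λ| (i.e., λ lies in the open conic sector with apex at the origin and inner half-angle θ about the negative real axis), and (b) there exists a symmetric positive definite real matrix P with [[AᵀP + PA, PB, Cᵀ],[BᵀP, −γI, Dᵀ],[C, D, −γI]] negative definite. -/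

import Mathlib

open Matrix

/-- A real matrix is negative definite (in the quadratic-form sense):
`xᵀ M x < 0` for all nonzero real vectors `x`. -/
def Matrix.NegDefR {ι : Type*} [Fintype ι] (M : Matrix ι ι ℝ) : Prop :=
  ∀ x : ι → ℝ, x ≠ 0 → x ⬝ᵥ M *ᵥ x < 0

/-- A real matrix is positive definite (in the quadratic-form sense):
`xᵀ M x > 0` for all nonzero real vectors `x`. -/
def Matrix.PosDefR {ι : Type*} [Fintype ι] (M : Matrix ι ι ℝ) : Prop :=
  ∀ x : ι → ℝ, x ≠ 0 → 0 < x ⬝ᵥ M *ᵥ x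

variable {ι : Type*} [Fintype ι] [DecidableEq ι]

lemma conj_quadform (M W : Matrix ι ι ℝ) (y : ι → ℝ) :
    (W *ᵥ y) ⬝ᵥ (M *ᵥ (W *ᵥ y)) = y ⬝ᵥ ((Wᵀ * M * W) *ᵥ y) := by
  rw [Matrix.mulVec_mulVec, Matrix.dotProduct_mulVec, ← Matrix.vecMul_transpose,
    Matrix.vecMul_vecMul, ← Matrix.dotProduct_mulVec, Matrix.mul_assoc]

lemma negdef_congr {M W Wi : Matrix ι ι ℝ} (h1 : W * Wi = 1) (h2 : Wi * W = 1)
    (h : (Wᵀ * M * W).NegDefR) : M.NegDefR := by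
  intro x hx
  have hxy : W *ᵥ (Wi *ᵥ x) = x := by
    rw [Matrix.mulVec_mulVec, h1, Matrix.one_mulVec]
  have hy : Wi *ᵥ x ≠ 0 := by
    intro h0
    apply hx; rw [← hxy, h0, Matrix.mulVec_zero]
  have := h _ hy
  rwa [← conj_quadform, hxy] at this

lemma posdef_congr {M W Wi : Matrix ι ι ℝ} (h1 : W * Wi = 1)
    (h : (Wᵀ * M * W).PosDefR) : M.PosDefR := by
  intro x hx
  have hxy : W *ᵥ (Wi *ᵥ x) = x := by
    rw [Matrix.mulVec_mulVec, h1, Matrix.one_mulVec]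
  have hy : Wi *ᵥ x ≠ 0 := by
    intro h0
    apply hx; rw [← hxy, h0, Matrix.mulVec_zero]
  have := h _ hy
  rwa [← conj_quadform, hxy] at this

noncomputable section
open Complex

def cv (a : ι → ℝ) : ι → ℂ := fun i => (a i : ℂ)

lemma ofReal_mulVec (M : Matrix ι ι ℝ) (b : ι → ℝ) :
    (M.map Complex.ofReal) *ᵥ (cv b) = cv (M *ᵥ b) := by
  funext i
  exact (RingHom.map_mulVec Complex.ofRealHom M b i).symm

lemma ofReal_dot (a b : ι → ℝ) : (cv a) ⬝ᵥ (cv b) = ((a ⬝ᵥ b : ℝ) : ℂ) := by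
  rw [show ((a ⬝ᵥ b : ℝ) : ℂ) = Complex.ofRealHom (a ⬝ᵥ b) from rfl,
    RingHom.map_dotProduct]
  rfl

lemma z_decomp (z : ι → ℂ) : z = cv (fun i => (z i).re) + Complex.I • cv (fun i => (z i).im) := by
  funext i
  simp [cv, Complex.ext_iff]

lemma star_decomp (z : ι → ℂ) :
    star z = cv (fun i => (z i).re) - Complex.I • cv (fun i => (z i).im) := by
  funext i
  simp [cv, Complex.ext_iff, Pi.star_apply]

lemma herm_val (M : Matrix ι ι ℝ) (hM : Mᵀ = M) (z : ι → ℂ) :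
    star z ⬝ᵥ (M.map Complex.ofReal *ᵥ z) =
      (((fun i => (z i).re) ⬝ᵥ M *ᵥ (fun i => (z i).re)
        + (fun i => (z i).im) ⬝ᵥ M *ᵥ (fun i => (z i).im) : ℝ) : ℂ) := by
  set u : ι → ℝ := fun i => (z i).re
  set w : ι → ℝ := fun i => (z i).im
  have hsym : ∀ a b : ι → ℝ, a ⬝ᵥ M *ᵥ b = b ⬝ᵥ M *ᵥ a := by
    intro a b
    rw [Matrix.dotProduct_mulVec, ← Matrix.mulVec_transpose, hM]
    exact dotProduct_comm _ _
  calc star z ⬝ᵥ (M.map Complex.ofReal *ᵥ z)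
      = (cv u - Complex.I • cv w) ⬝ᵥ (M.map Complex.ofReal *ᵥ (cv u + Complex.I • cv w)) := by
        rw [← star_decomp, ← z_decomp]
    _ = _ := by
        simp only [Matrix.mulVec_add, Matrix.mulVec_smul, ofReal_mulVec,
          sub_dotProduct, dotProduct_add, smul_dotProduct,
          dotProduct_smul, ofReal_dot, smul_eq_mul]
        rw [hsym w u]
        push_cast
        ring_nf
        rw [Complex.I_sq]
        ring

lemma quad_nonpos_of_negdef {M : Matrix ι ι ℝ} (h : M.NegDefR) (a : ι → ℝ) :
    a ⬝ᵥ M *ᵥ a ≤ 0 := by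
  by_cases ha : a = 0
  · simp [ha]
  · exact (h a ha).le

lemma negdef_herm {M : Matrix ι ι ℝ} (hM : Mᵀ = M) (h : M.NegDefR) (z : ι → ℂ)
    (hz : z ≠ 0) : ∃ c : ℝ, c < 0 ∧ star z ⬝ᵥ (M.map Complex.ofReal *ᵥ z) = (c : ℂ) := by
  set u : ι → ℝ := fun i => (z i).re with hu
  set w : ι → ℝ := fun i => (z i).im with hw
  refine ⟨u ⬝ᵥ M *ᵥ u + w ⬝ᵥ M *ᵥ w, ?_, herm_val M hM z⟩
  have huw : u ≠ 0 ∨ w ≠ 0 := by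
    by_contra hc
    push_neg at hc
    apply hz
    funext i
    have h1 : (z i).re = 0 := congrFun hc.1 i
    have h2 : (z i).im = 0 := congrFun hc.2 i
    exact Complex.ext h1 h2
  rcases huw with h' | h'
  · exact add_lt_of_lt_of_nonpos (h u h') (quad_nonpos_of_negdef h w)
  · exact add_lt_of_nonpos_of_lt (quad_nonpos_of_negdef h u) (h w h')

lemma quad_nonneg_of_posdef {M : Matrix ι ι ℝ} (h : M.PosDefR) (a : ι → ℝ) :
    0 ≤ a ⬝ᵥ M *ᵥ a := by
  by_cases ha : a = 0
  · simp [ha]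
  · exact (h a ha).le

lemma posdef_herm {M : Matrix ι ι ℝ} (hM : Mᵀ = M) (h : M.PosDefR) (z : ι → ℂ)
    (hz : z ≠ 0) : ∃ c : ℝ, 0 < c ∧ star z ⬝ᵥ (M.map Complex.ofReal *ᵥ z) = (c : ℂ) := by
  set u : ι → ℝ := fun i => (z i).re with hu
  set w : ι → ℝ := fun i => (z i).im with hw
  refine ⟨u ⬝ᵥ M *ᵥ u + w ⬝ᵥ M *ᵥ w, ?_, herm_val M hM z⟩
  have huw : u ≠ 0 ∨ w ≠ 0 := by
    by_contra hc
    push_neg at hc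
    apply hz
    funext i
    exact Complex.ext (congrFun hc.1 i) (congrFun hc.2 i)
  rcases huw with h' | h'
  · exact add_pos_of_pos_of_nonneg (h u h') (quad_nonneg_of_posdef h w)
  · exact add_pos_of_nonneg_of_pos (quad_nonneg_of_posdef h u) (h w h')

lemma star_dot_comm (w z : ι → ℂ) : star w ⬝ᵥ z = (starRingEnd ℂ) (star z ⬝ᵥ w) := by
  simp only [dotProduct, Pi.star_apply, map_sum, _root_.map_mul, RingHom.coe_coe]
  refine Finset.sum_congr rfl fun i _ => ?_
  simp [mul_comm]

lemma map_mulVec_star (M : Matrix ι ι ℝ) (z : ι → ℂ) :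
    (M.map Complex.ofReal) *ᵥ (star z) = star ((M.map Complex.ofReal) *ᵥ z) := by
  funext i
  simp only [Matrix.mulVec, dotProduct, Pi.star_apply, star_sum, star_mul',
    Matrix.map_apply]
  refine Finset.sum_congr rfl fun j _ => ?_
  simp [Complex.conj_ofReal]

lemma dot_transpose_map (M : Matrix ι ι ℝ) (z : ι → ℂ) :
    star z ⬝ᵥ ((Mᵀ.map Complex.ofReal) *ᵥ z)
      = (starRingEnd ℂ) (star z ⬝ᵥ ((M.map Complex.ofReal) *ᵥ z)) := by
  have h1 : (Mᵀ.map Complex.ofReal) = (M.map Complex.ofReal)ᵀ := Matrix.transpose_map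
  rw [h1, Matrix.dotProduct_mulVec, ← Matrix.mulVec_transpose, Matrix.transpose_transpose,
    map_mulVec_star, star_dot_comm, Matrix.dotProduct_mulVec]

lemma star_sum_elim {κ : Type*} (a : ι → ℂ) (b : κ → ℂ) :
    star (Sum.elim a b) = Sum.elim (star a) (star b) := by
  funext i; cases i <;> rfl

lemma map_smul_ofReal (c : ℝ) (M : Matrix ι ι ℝ) :
    (c • M).map Complex.ofReal = (c : ℂ) • (M.map Complex.ofReal) := by
  funext i j; simp

lemma map_mul_ofReal {κ : Type*} [Fintype κ] (M : Matrix ι κ ℝ) (N : Matrix κ ι ℝ) :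
    (M * N).map Complex.ofReal = M.map Complex.ofReal * N.map Complex.ofReal :=
  Matrix.map_mul (f := Complex.ofRealHom)

lemma sector_of_lmi {A P : Matrix ι ι ℝ} {θ : ℝ} (hθ₁ : 0 < θ) (hθ₂ : θ < Real.pi / 2)
    (hP : Pᵀ = P) (hPpos : P.PosDefR)
    (hΛ : (fromBlocks
        (Real.sin θ • (P * A + (P * A)ᵀ)) (Real.cos θ • (P * A - (P * A)ᵀ))
        (Real.cos θ • ((P * A)ᵀ - P * A)) (Real.sin θ • ((P * A)ᵀ + P * A))).NegDefR)
    (lam : ℂ)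
    (hdet : (lam • (1 : Matrix ι ι ℂ) - A.map Complex.ofReal).det = 0) :
    lam.re < 0 ∧ Real.cos θ * |lam.im| < Real.sin θ * |lam.re| := by
  have hπ := Real.pi_pos
  have hs : 0 < Real.sin θ := Real.sin_pos_of_pos_of_lt_pi hθ₁ (by linarith)
  have hc : 0 < Real.cos θ := Real.cos_pos_of_mem_Ioo ⟨by linarith, hθ₂⟩
  set sθ := Real.sin θ
  set cθ := Real.cos θ
  -- eigenvector
  obtain ⟨v, hv0, hv⟩ := (Matrix.exists_mulVec_eq_zero_iff).mpr hdet
  have hAv : (A.map Complex.ofReal) *ᵥ v = lam • v := by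
    have := hv
    rw [Matrix.sub_mulVec, sub_eq_zero, Matrix.smul_mulVec, Matrix.one_mulVec] at this
    exact this.symm
  -- p
  obtain ⟨pr, hpr, hp⟩ := posdef_herm hP hPpos v hv0
  set X := P * A with hX
  set Y := X.map Complex.ofReal with hY
  have hd : star v ⬝ᵥ (Y *ᵥ v) = lam * pr := by
    rw [hY, hX, map_mul_ofReal, ← Matrix.mulVec_mulVec, hAv, Matrix.mulVec_smul,
      dotProduct_smul, hp]
    simp
  have hdT : star v ⬝ᵥ ((Xᵀ.map Complex.ofReal) *ᵥ v) = (starRingEnd ℂ) lam * pr := by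
    rw [dot_transpose_map, hd]
    simp [Complex.conj_ofReal]
  -- symmetry of the big matrix
  have hΛsym : (fromBlocks
        (sθ • (X + Xᵀ)) (cθ • (X - Xᵀ))
        (cθ • (Xᵀ - X)) (sθ • (Xᵀ + X)))ᵀ = (fromBlocks
        (sθ • (X + Xᵀ)) (cθ • (X - Xᵀ))
        (cθ • (Xᵀ - X)) (sθ • (Xᵀ + X))) := by
    rw [Matrix.fromBlocks_transpose]
    refine Matrix.fromBlocks_inj.mpr ⟨?_, ?_, ?_, ?_⟩ <;>
      simp only [Matrix.transpose_smul, Matrix.transpose_add, Matrix.transpose_sub,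
        Matrix.transpose_transpose] <;> module
  -- the quadratic inequality for every t
  have hq : ∀ t : ℝ, sθ * lam.re * (1 + t ^ 2) - 2 * cθ * lam.im * t < 0 := by
    intro t
    set ζ : ι ⊕ ι → ℂ := Sum.elim v (((t : ℂ) * Complex.I) • v) with hζ
    have hζ0 : ζ ≠ 0 := by
      intro h0
      apply hv0
      funext i
      exact congrFun h0 (Sum.inl i)
    obtain ⟨c, hcneg, hcval⟩ := negdef_herm hΛsym hΛ ζ hζ0
    -- compute the quadratic form value
    have hmap : (fromBlocks (sθ • (X + Xᵀ)) (cθ • (X - Xᵀ)) (cθ • (Xᵀ - X))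
        (sθ • (Xᵀ + X))).map Complex.ofReal =
        fromBlocks ((sθ:ℂ) • (Y + Yᵀ)) ((cθ:ℂ) • (Y - Yᵀ)) ((cθ:ℂ) • (Yᵀ - Y))
          ((sθ:ℂ) • (Yᵀ + Y)) := by
      rw [Matrix.fromBlocks_map]
      refine Matrix.fromBlocks_inj.mpr ⟨?_, ?_, ?_, ?_⟩ <;> funext i j <;>
        simp [hY, Matrix.map_apply, Matrix.transpose_apply, mul_sub, mul_add, sub_eq_add_neg]
    have hdT' : star v ⬝ᵥ (Yᵀ *ᵥ v) = (starRingEnd ℂ) lam * pr := by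
      rw [hY, ← Matrix.transpose_map]; exact hdT
    have hd' : star v ⬝ᵥ (Y *ᵥ v) = lam * pr := hd
    set cι : ℂ := (t : ℂ) * Complex.I with hcι
    have hT1 : star v ⬝ᵥ (((sθ:ℂ) • (Y + Yᵀ)) *ᵥ v) = (sθ:ℂ) * (lam * pr + (starRingEnd ℂ) lam * pr) := by
      rw [Matrix.smul_mulVec, dotProduct_smul, Matrix.add_mulVec,
        dotProduct_add, hd', hdT', smul_eq_mul]
    have hT2 : star v ⬝ᵥ (((cθ:ℂ) • (Y - Yᵀ)) *ᵥ v) = (cθ:ℂ) * (lam * pr - (starRingEnd ℂ) lam * pr) := by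
      rw [Matrix.smul_mulVec, dotProduct_smul, Matrix.sub_mulVec,
        dotProduct_sub, hd', hdT', smul_eq_mul]
    have hT3 : star v ⬝ᵥ (((cθ:ℂ) • (Yᵀ - Y)) *ᵥ v) = (cθ:ℂ) * ((starRingEnd ℂ) lam * pr - lam * pr) := by
      rw [Matrix.smul_mulVec, dotProduct_smul, Matrix.sub_mulVec,
        dotProduct_sub, hd', hdT', smul_eq_mul]
    have hT4 : star v ⬝ᵥ (((sθ:ℂ) • (Yᵀ + Y)) *ᵥ v) = (sθ:ℂ) * ((starRingEnd ℂ) lam * pr + lam * pr) := by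
      rw [Matrix.smul_mulVec, dotProduct_smul, Matrix.add_mulVec,
        dotProduct_add, hd', hdT', smul_eq_mul]
    have hval : ((c : ℂ)) =
        (sθ:ℂ) * (lam * pr + (starRingEnd ℂ) lam * pr)
        + cι * ((cθ:ℂ) * (lam * pr - (starRingEnd ℂ) lam * pr))
        + (starRingEnd ℂ) cι * ((cθ:ℂ) * ((starRingEnd ℂ) lam * pr - lam * pr))
        + (starRingEnd ℂ) cι * (cι * ((sθ:ℂ) * ((starRingEnd ℂ) lam * pr + lam * pr))) := by
      rw [← hcval, hmap]
      rw [show ζ = Sum.elim v (cι • v) from hζ]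
      rw [star_sum_elim, Matrix.fromBlocks_mulVec, sumElim_dotProduct_sumElim]
      simp only [Sum.elim_comp_inl, Sum.elim_comp_inr, Matrix.mulVec_smul,
        dotProduct_add, dotProduct_smul,
        star_smul, smul_dotProduct, hT1, hT2, hT3, hT4, smul_eq_mul,
        starRingEnd_apply]
      ring
    have hceq : c = 2 * pr * (sθ * lam.re * (1 + t ^ 2) - 2 * cθ * lam.im * t) := by
      have h2 : ((c : ℂ)) = ((2 * pr * (sθ * lam.re * (1 + t ^ 2) - 2 * cθ * lam.im * t) : ℝ) : ℂ) := by
        rw [hval, hcι]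
        rw [show lam = (lam.re : ℂ) + (lam.im : ℂ) * Complex.I from (Complex.re_add_im lam).symm]
        simp only [map_add, _root_.map_mul, Complex.conj_ofReal, Complex.conj_I,
          Complex.add_re, Complex.add_im, Complex.mul_re, Complex.mul_im,
          Complex.ofReal_re, Complex.ofReal_im, Complex.I_re, Complex.I_im]
        push_cast
        ring_nf
        simp only [Complex.I_sq]
        ring
      exact_mod_cast h2
    have := hcneg
    rw [hceq] at this
    nlinarith [hpr]
  -- conclude from the family of inequalities
  have hre : lam.re < 0 := by
    by_contra hcon
    push_neg at hcon
    nlinarith [hq 0, mul_nonneg hs.le hcon]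
  refine ⟨hre, ?_⟩
  have hquad : ∀ t : ℝ, 0 < (-(sθ * lam.re)) * t ^ 2 + (2 * cθ * lam.im) * t + (-(sθ * lam.re)) := by
    intro t
    have := hq t
    nlinarith [this]
  have hdisc : discrim (-(sθ * lam.re)) (2 * cθ * lam.im) (-(sθ * lam.re)) < 0 := by
    apply discrim_lt_zero
    · nlinarith [hre, hs]
    · intro t
      have := hquad t
      nlinarith [this]
  rw [discrim] at hdisc
  have hsq : (cθ * |lam.im|) ^ 2 < (sθ * |lam.re|) ^ 2 := by
    have h1 : (cθ * |lam.im|) ^ 2 = cθ ^ 2 * lam.im ^ 2 := by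
      rw [mul_pow, _root_.sq_abs]
    have h2 : (sθ * |lam.re|) ^ 2 = sθ ^ 2 * lam.re ^ 2 := by
      rw [mul_pow, _root_.sq_abs]
    rw [h1, h2]
    nlinarith [hdisc]
  exact lt_of_pow_lt_pow_left₀ 2 (by positivity) hsq

end

/-- Theorem 1 of the paper. If the three synthesis LMIs (i)–(iii) are
feasible in the symmetric variables `S`, `R` and the matrices `Â`, `B̂`, `Ĉ`, then there
exists an output-feedback controller `(A_c, B_c, C_c)` such that (a) every eigenvalue of the
closed-loop matrix `A = [[A_p, B_p C_c],[B_c C_p, A_c]]` lies in the open conic sector with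
apex at the origin and inner half-angle `θ` about the negative real axis, and (b) there is a
symmetric positive definite `P` making the H∞ analysis LMI
`[[AᵀP + PA, PB, Cᵀ],[BᵀP, −γI, Dᵀ],[C, D, −γI]]` negative definite (i.e. `‖T_zw‖∞ ≤ γ`). -/
theorem stmt_0 (n m p q r : ℕ) (γ θ : ℝ) (hγ : 0 < γ)
    (hθ₁ : 0 < θ) (hθ₂ : θ < Real.pi / 2)
    (Ap : Matrix (Fin n) (Fin n) ℝ) (Bw : Matrix (Fin n) (Fin m) ℝ)
    (Bp : Matrix (Fin n) (Fin p) ℝ) (Cp : Matrix (Fin q) (Fin n) ℝ)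
    (Cz : Matrix (Fin r) (Fin n) ℝ) (Dz : Matrix (Fin r) (Fin m) ℝ)
    (S R Ahat : Matrix (Fin n) (Fin n) ℝ) (Bhat : Matrix (Fin n) (Fin q) ℝ)
    (Chat : Matrix (Fin p) (Fin n) ℝ)
    (hSsymm : Sᵀ = S) (hRsymm : Rᵀ = R)
    -- (i) the H∞ synthesis LMI, with Φ₁ = A_p S + S A_pᵀ + B_p Ĉ + Ĉᵀ B_pᵀ and
    --     Φ₂ = A_pᵀ R + R A_p + B̂ C_p + C_pᵀ B̂ᵀ
    (hLMI₁ : (fromBlocks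
        (fromBlocks
          (fromBlocks
            (Ap * S + S * Apᵀ + Bp * Chat + Chatᵀ * Bpᵀ)
            (Ahatᵀ + Ap)
            (Ahat + Apᵀ)
            (Apᵀ * R + R * Ap + Bhat * Cp + Cpᵀ * Bhatᵀ))
          (fromRows Bw (R * Bw))
          (fromCols Bwᵀ (Bwᵀ * Rᵀ))
          (-(γ • (1 : Matrix (Fin m) (Fin m) ℝ))))
        (fromRows (fromRows (S * Czᵀ) Czᵀ) Dzᵀ)
        (fromCols (fromCols (Cz * S) Cz) Dz)
        (-(γ • (1 : Matrix (Fin r) (Fin r) ℝ)))).NegDefR)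
    -- (ii) the conic-sector pole-placement LMI, with
    --     Φ₃ = [[A_p S + B_p Ĉ, A_p],[Â, R A_p + B̂ C_p]]
    (hLMI₂ : (fromBlocks
        (Real.sin θ •
          (fromBlocks (Ap * S + Bp * Chat) Ap Ahat (R * Ap + Bhat * Cp) +
            (fromBlocks (Ap * S + Bp * Chat) Ap Ahat (R * Ap + Bhat * Cp))ᵀ))
        (Real.cos θ •
          (fromBlocks (Ap * S + Bp * Chat) Ap Ahat (R * Ap + Bhat * Cp) -
            (fromBlocks (Ap * S + Bp * Chat) Ap Ahat (R * Ap + Bhat * Cp))ᵀ))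
        (Real.cos θ •
          ((fromBlocks (Ap * S + Bp * Chat) Ap Ahat (R * Ap + Bhat * Cp))ᵀ -
            fromBlocks (Ap * S + Bp * Chat) Ap Ahat (R * Ap + Bhat * Cp)))
        (Real.sin θ •
          ((fromBlocks (Ap * S + Bp * Chat) Ap Ahat (R * Ap + Bhat * Cp))ᵀ +
            fromBlocks (Ap * S + Bp * Chat) Ap Ahat (R * Ap + Bhat * Cp)))).NegDefR)
    -- (iii) the coupling LMI
    (hLMI₃ : (fromBlocks S (1 : Matrix (Fin n) (Fin n) ℝ) 1 R).PosDefR) :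
    ∃ (Ac : Matrix (Fin n) (Fin n) ℝ) (Bc : Matrix (Fin n) (Fin q) ℝ)
      (Cc : Matrix (Fin p) (Fin n) ℝ),
      -- (a) regional pole placement of the closed-loop eigenvalues
      (∀ lam : ℂ,
        (lam • (1 : Matrix (Fin n ⊕ Fin n) (Fin n ⊕ Fin n) ℂ) -
            (fromBlocks Ap (Bp * Cc) (Bc * Cp) Ac).map Complex.ofReal).det = 0 →
        lam.re < 0 ∧ Real.cos θ * |lam.im| < Real.sin θ * |lam.re|) ∧
      -- (b) the LMI characterization of the closed-loop H∞ norm bound ‖T_zw‖∞ ≤ γ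
      (∃ P : Matrix (Fin n ⊕ Fin n) (Fin n ⊕ Fin n) ℝ,
        Pᵀ = P ∧ P.PosDefR ∧
        (fromBlocks
          (fromBlocks
            ((fromBlocks Ap (Bp * Cc) (Bc * Cp) Ac)ᵀ * P +
              P * fromBlocks Ap (Bp * Cc) (Bc * Cp) Ac)
            (P * fromRows Bw (0 : Matrix (Fin n) (Fin m) ℝ))
            ((fromRows Bw (0 : Matrix (Fin n) (Fin m) ℝ))ᵀ * P)
            (-(γ • (1 : Matrix (Fin m) (Fin m) ℝ))))
          (fromRows (fromCols Cz (0 : Matrix (Fin r) (Fin n) ℝ))ᵀ Dzᵀ)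
          (fromCols (fromCols Cz (0 : Matrix (Fin r) (Fin n) ℝ)) Dz)
          (-(γ • (1 : Matrix (Fin r) (Fin r) ℝ)))).NegDefR) := by  classical
  -- invertibility of N' = 1 - R * S
  set N' : Matrix (Fin n) (Fin n) ℝ := 1 - R * S with hN'
  have hdet : N'.det ≠ 0 := by
    intro h0
    obtain ⟨v, hv0, hv⟩ := (Matrix.exists_mulVec_eq_zero_iff).mpr h0
    have hvRS : (R * S) *ᵥ v = v := by
      have := hv
      rw [hN', Matrix.sub_mulVec, sub_eq_zero, Matrix.one_mulVec] at this
      exact this.symm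
    set a : Fin n → ℝ := S *ᵥ v with ha'
    have hRa : R *ᵥ a = v := by
      rw [ha', Matrix.mulVec_mulVec, hvRS]
    have ha : a ≠ 0 := by
      intro h
      apply hv0
      rw [← hRa, h, Matrix.mulVec_zero]
    have hx : Sum.elim (-v) a ≠ (0 : Fin n ⊕ Fin n → ℝ) := by
      intro h
      apply ha
      funext i
      exact congrFun h (Sum.inr i)
    have hform := hLMI₃ _ hx
    have hz : (fromBlocks S (1 : Matrix (Fin n) (Fin n) ℝ) 1 R) *ᵥ Sum.elim (-v) a = 0 := by
      rw [Matrix.fromBlocks_mulVec]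
      simp only [Sum.elim_comp_inl, Sum.elim_comp_inr]
      have h1 : S *ᵥ (-v) + 1 *ᵥ a = 0 := by
        rw [Matrix.mulVec_neg, Matrix.one_mulVec, ← ha']
        simp
      have h2 : (1 : Matrix (Fin n) (Fin n) ℝ) *ᵥ (-v) + R *ᵥ a = 0 := by
        rw [Matrix.one_mulVec, hRa]
        simp
      rw [h1, h2]
      funext i
      cases i <;> rfl
    rw [hz, dotProduct_zero] at hform
    exact lt_irrefl 0 hform
  have hNDu : IsUnit N'.det := isUnit_iff_ne_zero.mpr hdet
  set Ni : Matrix (Fin n) (Fin n) ℝ := N'⁻¹ with hNi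
  have hN1 : N' * Ni = 1 := Matrix.mul_nonsing_inv N' hNDu
  have hN2 : Ni * N' = 1 := Matrix.nonsing_inv_mul N' hNDu
  -- controller and Lyapunov matrices
  set Cc : Matrix (Fin p) (Fin n) ℝ := Chat * Ni with hCc'
  set Bc : Matrix (Fin n) (Fin q) ℝ := Bhat with hBc'
  set Ac : Matrix (Fin n) (Fin n) ℝ :=
    (Ahat - R * (Ap * S) - Bhat * (Cp * S) - R * (Bp * Chat)) * Ni with hAc'
  have hCcN : Cc * N' = Chat := by
    rw [hCc', Matrix.mul_assoc, hN2, Matrix.mul_one]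
  have hAcN : Ac * N' = Ahat - R * (Ap * S) - Bhat * (Cp * S) - R * (Bp * Chat) := by
    rw [hAc', Matrix.mul_assoc, hN2, Matrix.mul_one]
  set Pi1 : Matrix (Fin n ⊕ Fin n) (Fin n ⊕ Fin n) ℝ := fromBlocks S 1 N' 0 with hPi1'
  set PiI : Matrix (Fin n ⊕ Fin n) (Fin n ⊕ Fin n) ℝ := fromBlocks 0 Ni 1 (-(S * Ni)) with hPiI'
  set Pi2 : Matrix (Fin n ⊕ Fin n) (Fin n ⊕ Fin n) ℝ := fromBlocks 1 R 0 1 with hPi2'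
  set P : Matrix (Fin n ⊕ Fin n) (Fin n ⊕ Fin n) ℝ := Pi2 * PiI with hP'
  set Acl : Matrix (Fin n ⊕ Fin n) (Fin n ⊕ Fin n) ℝ :=
    fromBlocks Ap (Bp * Cc) (Bc * Cp) Ac with hAcl'
  have hPiA : Pi1 * PiI = 1 := by
    rw [hPi1', hPiI', Matrix.fromBlocks_multiply, ← Matrix.fromBlocks_one]
    refine Matrix.fromBlocks_inj.mpr ⟨by simp, by simp, by simp, by simp [hN1]⟩
  have hPiB : PiI * Pi1 = 1 := by
    rw [hPi1', hPiI', Matrix.fromBlocks_multiply, ← Matrix.fromBlocks_one]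
    refine Matrix.fromBlocks_inj.mpr ⟨by simp [hN2], by simp, ?_, by simp⟩
    simp [Matrix.mul_assoc, hN2]
  have hPi1T : Pi1ᵀ = fromBlocks S (1 - S * R) 1 0 := by
    rw [hPi1', Matrix.fromBlocks_transpose, hSsymm, Matrix.transpose_one, Matrix.transpose_zero,
      hN', Matrix.transpose_sub, Matrix.transpose_one, Matrix.transpose_mul, hSsymm, hRsymm]
  have hPi2T : Pi2ᵀ = fromBlocks 1 0 R 1 := by
    rw [hPi2', Matrix.fromBlocks_transpose, hRsymm, Matrix.transpose_one, Matrix.transpose_zero]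
  have hcross : Pi2ᵀ * Pi1 = fromBlocks S 1 1 R := by
    rw [hPi2T, hPi1', Matrix.fromBlocks_multiply]
    refine Matrix.fromBlocks_inj.mpr ⟨by simp, by simp, by simp [hN'], by simp [hN', Matrix.mul_sub, Matrix.mul_assoc]⟩
  have hcross2 : Pi1ᵀ * Pi2 = fromBlocks S 1 1 R := by
    rw [hPi1T, hPi2', Matrix.fromBlocks_multiply]
    refine Matrix.fromBlocks_inj.mpr ⟨by simp, ?_, by simp, by simp⟩
    simp only [Matrix.mul_one, Matrix.mul_zero, add_zero, zero_add]
    abel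
  have hPPi1 : P * Pi1 = Pi2 := by
    rw [hP', Matrix.mul_assoc, hPiB, Matrix.mul_one]
  have hPsym : Pᵀ = P := by
    have h1 : Pᵀ = PiIᵀ * Pi2ᵀ := by rw [hP', Matrix.transpose_mul]
    calc Pᵀ = PiIᵀ * Pi2ᵀ := h1
      _ = PiIᵀ * ((Pi2ᵀ * Pi1) * PiI) := by
          rw [Matrix.mul_assoc Pi2ᵀ Pi1 PiI, hPiA, Matrix.mul_one]
      _ = PiIᵀ * ((Pi1ᵀ * Pi2) * PiI) := by rw [hcross, hcross2]
      _ = (Pi1 * PiI)ᵀ * (Pi2 * PiI) := by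
          rw [Matrix.transpose_mul, Matrix.mul_assoc, Matrix.mul_assoc]
      _ = P := by rw [hPiA, Matrix.transpose_one, Matrix.one_mul, hP']
  have hPi1TP : Pi1ᵀ * P = Pi2ᵀ := by
    calc Pi1ᵀ * P = Pi1ᵀ * Pᵀ := by rw [hPsym]
      _ = (P * Pi1)ᵀ := (Matrix.transpose_mul P Pi1).symm
      _ = Pi2ᵀ := by rw [hPPi1]
  set Φ₃ : Matrix (Fin n ⊕ Fin n) (Fin n ⊕ Fin n) ℝ :=
    fromBlocks (Ap * S + Bp * Chat) Ap Ahat (R * Ap + Bhat * Cp) with hΦ₃'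
  have hKey : Pi2ᵀ * Acl * Pi1 = Φ₃ := by
    rw [hPi2T, hAcl', hPi1', hΦ₃', Matrix.fromBlocks_multiply, Matrix.fromBlocks_multiply]
    refine Matrix.fromBlocks_inj.mpr ⟨?_, ?_, ?_, ?_⟩
    · simp only [Matrix.one_mul, Matrix.zero_mul, add_zero, zero_add, Matrix.mul_zero,
        Matrix.mul_one, Matrix.add_mul, Matrix.mul_assoc]
      rw [show Cc * N' = Chat from hCcN]

    · simp only [Matrix.one_mul, Matrix.zero_mul, add_zero, zero_add, Matrix.mul_zero,
        Matrix.mul_one]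
    · simp only [Matrix.one_mul, Matrix.zero_mul, add_zero, zero_add, Matrix.mul_zero,
        Matrix.mul_one, Matrix.add_mul, Matrix.mul_assoc]
      rw [show Cc * N' = Chat from hCcN]
      rw [show Ac * N' = Ahat - R * (Ap * S) - Bhat * (Cp * S) - R * (Bp * Chat) from hAcN]
      abel
    · simp only [Matrix.one_mul, Matrix.zero_mul, add_zero, zero_add, Matrix.mul_zero,
        Matrix.mul_one, Matrix.add_mul]
      rfl
  have hPA3 : Pi1ᵀ * (P * Acl) * Pi1 = Φ₃ := by
    calc Pi1ᵀ * (P * Acl) * Pi1 = ((Pi1ᵀ * P) * Acl) * Pi1 := by rw [Matrix.mul_assoc Pi1ᵀ P Acl]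
      _ = Pi2ᵀ * Acl * Pi1 := by rw [hPi1TP]
      _ = Φ₃ := hKey
  have hXT : Pi1ᵀ * (P * Acl)ᵀ * Pi1 = Φ₃ᵀ := by
    have h := congrArg Matrix.transpose hPA3
    rw [Matrix.transpose_mul, Matrix.transpose_mul, Matrix.transpose_transpose,
      ← Matrix.mul_assoc] at h
    exact h
  have hPpos : P.PosDefR := by
    apply posdef_congr hPiA
    rw [hPi1TP, hcross]
    exact hLMI₃
  -- congruence matrices for the two LMIs
  refine ⟨Ac, Bc, Cc, ?_, ⟨P, hPsym, hPpos, ?_⟩⟩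
  · -- (a) pole placement
    intro lam hdet
    have hAclTP : Aclᵀ * P = (P * Acl)ᵀ := by rw [Matrix.transpose_mul, hPsym]
    -- the closed-loop sector LMI via congruence
    set W2 : Matrix ((Fin n ⊕ Fin n) ⊕ (Fin n ⊕ Fin n)) ((Fin n ⊕ Fin n) ⊕ (Fin n ⊕ Fin n)) ℝ :=
      fromBlocks Pi1 0 0 Pi1 with hW2'
    set Wi2 : Matrix ((Fin n ⊕ Fin n) ⊕ (Fin n ⊕ Fin n)) ((Fin n ⊕ Fin n) ⊕ (Fin n ⊕ Fin n)) ℝ :=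
      fromBlocks PiI 0 0 PiI with hWi2'
    have hW2a : W2 * Wi2 = 1 := by
      rw [hW2', hWi2', Matrix.fromBlocks_multiply, ← Matrix.fromBlocks_one]
      exact Matrix.fromBlocks_inj.mpr ⟨by simp [hPiA], by simp, by simp, by simp [hPiA]⟩
    have hW2b : Wi2 * W2 = 1 := by
      rw [hW2', hWi2', Matrix.fromBlocks_multiply, ← Matrix.fromBlocks_one]
      exact Matrix.fromBlocks_inj.mpr ⟨by simp [hPiB], by simp, by simp, by simp [hPiB]⟩
    have hE2 : W2ᵀ * (fromBlocks
        (Real.sin θ • (P * Acl + (P * Acl)ᵀ)) (Real.cos θ • (P * Acl - (P * Acl)ᵀ))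
        (Real.cos θ • ((P * Acl)ᵀ - P * Acl)) (Real.sin θ • ((P * Acl)ᵀ + P * Acl))) * W2
        = fromBlocks
        (Real.sin θ • (Φ₃ + Φ₃ᵀ)) (Real.cos θ • (Φ₃ - Φ₃ᵀ))
        (Real.cos θ • (Φ₃ᵀ - Φ₃)) (Real.sin θ • (Φ₃ᵀ + Φ₃)) := by
      rw [hW2', Matrix.fromBlocks_transpose, Matrix.transpose_zero,
        Matrix.fromBlocks_multiply, Matrix.fromBlocks_multiply]
      refine Matrix.fromBlocks_inj.mpr ⟨?_, ?_, ?_, ?_⟩ <;>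
        simp only [Matrix.zero_mul, Matrix.mul_zero, add_zero, zero_add,
          Matrix.mul_smul, Matrix.smul_mul, Matrix.mul_add, Matrix.add_mul,
          Matrix.mul_sub, Matrix.sub_mul, hPA3, hXT, smul_zero, sub_zero]
    have hLam : (fromBlocks
        (Real.sin θ • (P * Acl + (P * Acl)ᵀ)) (Real.cos θ • (P * Acl - (P * Acl)ᵀ))
        (Real.cos θ • ((P * Acl)ᵀ - P * Acl)) (Real.sin θ • ((P * Acl)ᵀ + P * Acl))).NegDefR := by
      apply negdef_congr hW2a hW2b
      rw [hE2]
      exact hLMI₂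
    exact sector_of_lmi hθ₁ hθ₂ hPsym hPpos hLam lam hdet
  · -- (b) the H∞ LMI
    set Bcl : Matrix (Fin n ⊕ Fin n) (Fin m) ℝ := fromRows Bw 0 with hBcl'
    set Ccl : Matrix (Fin r) (Fin n ⊕ Fin n) ℝ := fromCols Cz 0 with hCcl'
    have hAclTP : Aclᵀ * P = (P * Acl)ᵀ := by rw [Matrix.transpose_mul, hPsym]
    have c1 : Pi1ᵀ * (Aclᵀ * P + P * Acl) * Pi1 =
        fromBlocks (Ap * S + S * Apᵀ + Bp * Chat + Chatᵀ * Bpᵀ) (Ahatᵀ + Ap) (Ahat + Apᵀ)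
          (Apᵀ * R + R * Ap + Bhat * Cp + Cpᵀ * Bhatᵀ) := by
      rw [hAclTP, Matrix.mul_add, Matrix.add_mul, hXT, hPA3]
      rw [hΦ₃', Matrix.fromBlocks_transpose, Matrix.fromBlocks_add]
      refine Matrix.fromBlocks_inj.mpr ⟨?_, ?_, ?_, ?_⟩ <;>
        (try simp only [Matrix.transpose_add, Matrix.transpose_mul, hSsymm, hRsymm]) <;> abel
    have c2 : Pi1ᵀ * (P * Bcl) = fromRows Bw (R * Bw) := by
      rw [← Matrix.mul_assoc, hPi1TP, hPi2T, hBcl', Matrix.fromBlocks_mul_fromRows]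
      simp
    have c3 : (Bclᵀ * P) * Pi1 = fromCols Bwᵀ (Bwᵀ * Rᵀ) := by
      rw [Matrix.mul_assoc, hPPi1, hBcl', Matrix.transpose_fromRows, Matrix.transpose_zero,
        hPi2', Matrix.fromCols_mul_fromBlocks, hRsymm]
      simp
    have c4 : Ccl * Pi1 = fromCols (Cz * S) Cz := by
      rw [hCcl', hPi1', Matrix.fromCols_mul_fromBlocks]
      simp
    have c5 : Pi1ᵀ * Cclᵀ = fromRows (S * Czᵀ) Czᵀ := by
      rw [← Matrix.transpose_mul Ccl Pi1, c4, Matrix.transpose_fromCols,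
        Matrix.transpose_mul, hSsymm]
    set W1 : Matrix ((Fin n ⊕ Fin n) ⊕ Fin m) ((Fin n ⊕ Fin n) ⊕ Fin m) ℝ :=
      fromBlocks Pi1 0 0 1 with hW1'
    set Wi1 : Matrix ((Fin n ⊕ Fin n) ⊕ Fin m) ((Fin n ⊕ Fin n) ⊕ Fin m) ℝ :=
      fromBlocks PiI 0 0 1 with hWi1'
    set W : Matrix (((Fin n ⊕ Fin n) ⊕ Fin m) ⊕ Fin r) (((Fin n ⊕ Fin n) ⊕ Fin m) ⊕ Fin r) ℝ :=
      fromBlocks W1 0 0 1 with hW'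
    set Wi : Matrix (((Fin n ⊕ Fin n) ⊕ Fin m) ⊕ Fin r) (((Fin n ⊕ Fin n) ⊕ Fin m) ⊕ Fin r) ℝ :=
      fromBlocks Wi1 0 0 1 with hWi'
    have hW1a : W1 * Wi1 = 1 := by
      rw [hW1', hWi1', Matrix.fromBlocks_multiply, ← Matrix.fromBlocks_one]
      exact Matrix.fromBlocks_inj.mpr ⟨by simp [hPiA], by simp, by simp, by simp⟩
    have hW1b : Wi1 * W1 = 1 := by
      rw [hW1', hWi1', Matrix.fromBlocks_multiply, ← Matrix.fromBlocks_one]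
      exact Matrix.fromBlocks_inj.mpr ⟨by simp [hPiB], by simp, by simp, by simp⟩
    have hWa : W * Wi = 1 := by
      rw [hW', hWi', Matrix.fromBlocks_multiply, ← Matrix.fromBlocks_one]
      exact Matrix.fromBlocks_inj.mpr ⟨by simp [hW1a], by simp, by simp, by simp⟩
    have hWb : Wi * W = 1 := by
      rw [hW', hWi', Matrix.fromBlocks_multiply, ← Matrix.fromBlocks_one]
      exact Matrix.fromBlocks_inj.mpr ⟨by simp [hW1b], by simp, by simp, by simp⟩
    apply negdef_congr hWa hWb
    have hE1 : Wᵀ * (fromBlocks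
          (fromBlocks (Aclᵀ * P + P * Acl) (P * Bcl) (Bclᵀ * P) (-(γ • (1 : Matrix (Fin m) (Fin m) ℝ))))
          (fromRows Cclᵀ Dzᵀ) (fromCols Ccl Dz) (-(γ • (1 : Matrix (Fin r) (Fin r) ℝ)))) * W =
        fromBlocks
          (fromBlocks
            (fromBlocks (Ap * S + S * Apᵀ + Bp * Chat + Chatᵀ * Bpᵀ) (Ahatᵀ + Ap) (Ahat + Apᵀ)
              (Apᵀ * R + R * Ap + Bhat * Cp + Cpᵀ * Bhatᵀ))
            (fromRows Bw (R * Bw)) (fromCols Bwᵀ (Bwᵀ * Rᵀ))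
            (-(γ • (1 : Matrix (Fin m) (Fin m) ℝ))))
          (fromRows (fromRows (S * Czᵀ) Czᵀ) Dzᵀ)
          (fromCols (fromCols (Cz * S) Cz) Dz)
          (-(γ • (1 : Matrix (Fin r) (Fin r) ℝ))) := by
      rw [hW', Matrix.fromBlocks_transpose, Matrix.transpose_zero, Matrix.transpose_one,
        Matrix.fromBlocks_multiply, Matrix.fromBlocks_multiply]
      refine Matrix.fromBlocks_inj.mpr ⟨?_, ?_, ?_, ?_⟩
      · -- W1ᵀ * L11 * W1
        simp only [Matrix.transpose_zero, Matrix.zero_mul, Matrix.mul_zero, add_zero,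
          zero_add, Matrix.mul_one, Matrix.one_mul]
        rw [hW1', Matrix.fromBlocks_transpose, Matrix.transpose_zero, Matrix.transpose_one,
          Matrix.fromBlocks_multiply, Matrix.fromBlocks_multiply]
        refine Matrix.fromBlocks_inj.mpr ⟨?_, ?_, ?_, ?_⟩ <;>
          simp only [Matrix.transpose_zero, Matrix.zero_mul, Matrix.mul_zero, add_zero,
            zero_add, Matrix.mul_one, Matrix.one_mul, c1, c2, c3]
      · -- W1ᵀ * L12
        simp only [Matrix.transpose_zero, Matrix.zero_mul, Matrix.mul_zero, add_zero,
          zero_add, Matrix.mul_one, Matrix.one_mul]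
        rw [hW1', Matrix.fromBlocks_transpose, Matrix.transpose_zero, Matrix.transpose_one,
          Matrix.fromBlocks_mul_fromRows]
        simp only [Matrix.transpose_zero, Matrix.zero_mul, Matrix.mul_zero, add_zero,
          zero_add, Matrix.mul_one, Matrix.one_mul, c5]
      · -- L21 * W1
        simp only [Matrix.transpose_zero, Matrix.zero_mul, Matrix.mul_zero, add_zero,
          zero_add, Matrix.mul_one, Matrix.one_mul]
        rw [hW1', Matrix.fromCols_mul_fromBlocks]
        simp only [Matrix.zero_mul, Matrix.mul_zero, add_zero, zero_add, Matrix.mul_one,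
          Matrix.one_mul, c4]
      · simp only [Matrix.transpose_zero, Matrix.zero_mul, Matrix.mul_zero, add_zero,
          zero_add, Matrix.mul_one, Matrix.one_mul]
    rw [hE1]
    exact hLMI₁
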